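/- There is a constant c = c(k,d,β) such that for any f, g ∈ 𝓕 and any x ∈ [0,1]^k, ∠(f⃗(x), g⃗(x)) ≤ c · max_{s=1,…,k} ‖∂_s f(x) − ∂_s g(x)‖_∞. -/

import Mathlib

open MeasureTheory Filter Set
open scoped RealInnerProductSpace

noncomputable section

abbrev Euc (n : ℕ) := EuclideanSpace ℝ (Fin n)

/-- The sup-norm `‖x‖_∞` of a vector. -/
def supNorm {n : ℕ} (x : Euc n) : ℝ := ⨆ i, |x i|

/-- The unit cube `[0,1]^n`. -/
def unitCube (n : ℕ) : Set (Euc n) := {x | ∀ i, x i ∈ Set.Icc (0:ℝ) 1}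

/-- The uniform probability measure on `[0,1]^n`. -/
def cubeUniform (n : ℕ) : Measure (Euc n) := volume.restrict (unitCube n)

/-- The angle between two linear subspaces of `ℝ^d`:
`max_{0 ≠ u ∈ H} min_{0 ≠ v ∈ K} arccos (⟨u,v⟩ / (‖u‖‖v‖))`. -/
def subAngle {d : ℕ} (H K : Submodule ℝ (Euc d)) : ℝ :=
  ⨆ u : {u : Euc d // u ∈ H ∧ u ≠ 0},
    ⨅ v : {v : Euc d // v ∈ K ∧ v ≠ 0},
      Real.arccos (⟪u.1, v.1⟫ / (‖u.1‖ * ‖v.1‖))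

/-- The Grassmannian `G(k,d)` of `k`-dimensional linear subspaces of `ℝ^d`. -/
def Grass (k d : ℕ) := {H : Submodule ℝ (Euc d) // Module.finrank ℝ H = k}

/-- The ball `B(H,ε)` in the Grassmannian, for the angle metric. -/
def GrassBall {k d : ℕ} (H : Grass k d) (ε : ℝ) : Set (Grass k d) :=
  {K | subAngle H.1 K.1 ≤ ε}

instance {k d : ℕ} : MeasurableSpace (Grass k d) :=
  MeasurableSpace.generateFrom {S | ∃ H ε, S = GrassBall H ε}

/-- Action of an orthogonal transformation on the Grassmannian. -/
def rotGrass {k d : ℕ} (Q : Euc d ≃ₗᵢ[ℝ] Euc d) (H : Grass k d) : Grass k d :=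
  ⟨H.1.map (Q.toLinearEquiv : Euc d →ₗ[ℝ] Euc d),
    (LinearEquiv.finrank_map_eq _ _).trans H.2⟩

/-- A measure on the Grassmannian invariant under the orthogonal group `O(d)`. -/
def IsOrthInvariant {k d : ℕ} (lam : Measure (Grass k d)) : Prop :=
  ∀ Q : Euc d ≃ₗᵢ[ℝ] Euc d, ∀ S : Set (Grass k d), MeasurableSet S →
    lam (rotGrass Q ⁻¹' S) = lam S

/-- Partial derivative `∂_s f`. -/
def pd {k n : ℕ} (s : Fin k) (f : Euc k → Euc n) : Euc k → Euc n :=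
  fun x => fderiv ℝ f x (EuclideanSpace.single s 1)

/-- Iterated partial derivatives along a list of directions. -/
def pdIter {k n : ℕ} (l : List (Fin k)) (f : Euc k → Euc n) : Euc k → Euc n :=
  l.foldr pd f

/-- The list of directions associated to a multi-index. -/
def listOf {k : ℕ} (s : Fin k → ℕ) : List (Fin k) :=
  (List.finRange k).foldr (fun i l => List.replicate (s i) i ++ l) []

/-- Partial derivative `f^{(𝐬)}` of multi-order `𝐬`. -/
def mderiv {k n : ℕ} (s : Fin k → ℕ) (f : Euc k → Euc n) : Euc k → Euc n :=
  pdIter (listOf s) f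

/-- `r = max {m ∈ ℕ : m < α}`. -/
def rr (α : ℝ) : ℕ := sSup {m : ℕ | (m : ℝ) < α}

/-- The Hölder class `H^{k,n}(α,β)`. -/
def Holder (k n : ℕ) (α β : ℝ) : Set (Euc k → Euc n) :=
  {f | Set.MapsTo f (unitCube k) (unitCube n) ∧
    (∀ l : List (Fin k), l.length < rr α → Differentiable ℝ (pdIter l f)) ∧
    (∀ s : Fin k → ℕ, (∑ i, s i) ≤ rr α → ∀ x ∈ unitCube k, supNorm (mderiv s f x) ≤ β) ∧
    (∀ s : Fin k → ℕ, (∑ i, s i) = rr α → ∀ x ∈ unitCube k, ∀ y ∈ unitCube k,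
      supNorm (mderiv s f x - mderiv s f y) ≤ β * supNorm (x - y) ^ (α - rr α))}

/-- The tangent space `f⃗(x) = span {∂_s f(x) : s}`. -/
def tangent {k d : ℕ} (f : Euc k → Euc d) (x : Euc k) : Submodule ℝ (Euc d) :=
  Submodule.span ℝ (Set.range fun s => pd s f x)

/-- The class `𝓕` of the paper. -/
def ClassF (k d : ℕ) (β : ℝ) : Set (Euc k → Euc d) :=
  {f | Set.MapsTo f (unitCube k) (unitCube d) ∧
    Set.InjOn f (unitCube k) ∧
    Differentiable ℝ f ∧ (∀ s, Differentiable ℝ (pd s f)) ∧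
    (∀ s, ∀ x ∈ unitCube k, 1/β ≤ supNorm (pd s f x) ∧ supNorm (pd s f x) ≤ β) ∧
    (∀ s t, ∀ x ∈ unitCube k, supNorm (pd t (pd s f) x) ≤ β) ∧
    (1 < k → ∀ s, ∀ x ∈ unitCube k,
      1/(2*β*((d:ℝ) - k)) ≤ subAngle (Submodule.span ℝ {pd s f x})
        (Submodule.span ℝ ((fun t => pd t f x) '' {t | t ≠ s})))}

/-- `f` interpolates `(z, w) ∈ [0,1]^d × G(k,d)`. -/
def InterpF {k d : ℕ} (f : Euc k → Euc d) (p : Euc d × Grass k d) : Prop :=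
  ∃ x ∈ unitCube k, f x = p.1 ∧ tangent f x = p.2.1

/-- `N_n^→(𝓕) = max_{f ∈ 𝓕} #{i : f interpolates (Z_i,W_i)}`. -/
def NFmax (k d : ℕ) (β : ℝ) {n : ℕ} (ω : Fin n → Euc d × Grass k d) : ℕ :=
  ⨆ f : ClassF k d β, Nat.card {i : Fin n // InterpF f.1 (ω i)}

/-- The set `𝐒` of multi-indices of total order at most `r₀`. -/
def SIdx (k r0 : ℕ) := {s : Fin k → Fin (r0+1) // (∑ i, (s i : ℕ)) ≤ r0}

instance (k r0 : ℕ) : Fintype (SIdx k r0) := by unfold SIdx; infer_instance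

/-- The multi-index in `ℕ^k` associated to an element of `𝐒`. -/
def toMulti {k r0 : ℕ} (s : SIdx k r0) : Fin k → ℕ := fun i => (s.1 i : ℕ)

/-- The uniform probability measure on `[-β,β]^n`. -/
def boxUniform (n : ℕ) (β : ℝ) : Measure (Euc n) :=
  (ENNReal.ofReal ((2*β)^n))⁻¹ • volume.restrict {y : Euc n | ∀ j, y j ∈ Set.Icc (-β) β}

open Classical in
/-- The distribution of one observation `(X, Y^𝐒)` under the null hypothesis:
uniform on `[0,1]^k × [0,1]^{d-k} × [-β,β]^{(d-k)(|𝐒|-1)}`. -/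
def obsMeasure (k d r0 : ℕ) (β : ℝ) : Measure (Euc k × (SIdx k r0 → Euc (d-k))) :=
  (cubeUniform k).prod (Measure.pi fun s : SIdx k r0 =>
    if (∀ i, s.1 i = 0) then cubeUniform (d-k) else boxUniform (d-k) β)

/-- `f` interpolates `(x, y^𝐒)`. -/
def InterpH {k d r0 : ℕ} (f : Euc k → Euc (d-k))
    (p : Euc k × (SIdx k r0 → Euc (d-k))) : Prop :=
  ∀ s : SIdx k r0, mderiv (toMulti s) f p.1 = p.2 s

/-- `N_n^{(r₀)}(𝓗) = max_{f ∈ 𝓗} #{i : f interpolates (X_i, Y_i^𝐒)}`. -/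
def NHmax (k d r0 : ℕ) (α β : ℝ) {n : ℕ}
    (ω : Fin n → Euc k × (SIdx k r0 → Euc (d-k))) : ℕ :=
  ⨆ f : Holder k (d-k) α β, Nat.card {i : Fin n // InterpH f.1 (ω i)}

/-- `w = Σ_{s=0}^{r₀} (1 - s/α) C(s+k-1, k-1)`. -/
def wconst (k r0 : ℕ) (α : ℝ) : ℝ :=
  ∑ s ∈ Finset.range (r0+1), (1 - s/α) * (Nat.choose (s+k-1) (k-1))

/-- `ρ(r₀) = k / (k + α (d-k) w)`. -/
def rho (k d r0 : ℕ) (α : ℝ) : ℝ := k / (k + α*((d:ℝ)-k)*wconst k r0 α)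

/-- Sup-norm of a function over the unit cube. -/
def funSup {k n : ℕ} (f : Euc k → Euc n) : ℝ := ⨆ x : unitCube k, supNorm (f x.1)

/-- The discrepancy `Φ` on the Hölder class. -/
def Phi {k n : ℕ} (r0 : ℕ) (α : ℝ) (f g : Euc k → Euc n) : ℝ :=
  ⨆ s : SIdx k r0, funSup (fun x => mderiv (toMulti s) f x - mderiv (toMulti s) g x) ^
    (α / (α - ∑ i, (toMulti s i : ℝ)))

/-- The discrepancy `Φ` on the values `y^𝐒`. -/
def PhiPt {k n r0 : ℕ} (α : ℝ) (y1 y2 : SIdx k r0 → Euc n) : ℝ :=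
  ⨆ s : SIdx k r0, supNorm (y1 s - y2 s) ^ (α / (α - ∑ i, (toMulti s i : ℝ)))

/-- Concatenation `ℝ^k × ℝ^{d-k} → ℝ^d`, identifying `ℝ^d` with `ℝ^k × ℝ^{d-k}`. -/
def pairFun {k d : ℕ} (h : k ≤ d) (x : Euc k) (y : Euc (d-k)) : Euc d :=
  WithLp.toLp 2 (fun j => Fin.append x y (Fin.cast (Nat.add_sub_cancel' h).symm j))

/-- `ε = ε(n)`, the solution of `ε^{-k/α} = ε^{(d-k)w} n`. -/
def epsN (k d r0 : ℕ) (α : ℝ) (n : ℕ) : ℝ :=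
  (n:ℝ) ^ (-(α / (k + α*((d:ℝ)-k)*wconst k r0 α)))

/-- The cell `I_m` of sidelength `ε'` indexed by `m`. -/
def cellI {k : ℕ} (ε' : ℝ) (m : Fin k → ℕ) : Set (Euc k) :=
  {x | ∀ i, x i ∈ Set.Ico ((m i : ℝ) * ε') (((m i : ℝ) + 1) * ε')}

open Classical in
/-- The box `R_m = I_m × [ε/2,ε]^{d-k} × Π_{𝐬 ≠ 0} [0,ε_𝐬]^{d-k}`. -/
def Rset (k d r0 : ℕ) (α : ℝ) (ε ε' : ℝ) (m : Fin k → ℕ) :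
    Set (Euc k × (SIdx k r0 → Euc (d-k))) :=
  {p | p.1 ∈ cellI ε' m ∧ ∀ s : SIdx k r0, ∀ j,
    if (∀ i, s.1 i = 0) then p.2 s j ∈ Set.Icc (ε/2) ε
    else p.2 s j ∈ Set.Icc 0 (ε ^ (1 - (∑ i, (toMulti s i : ℝ))/α))}


lemma supNorm_nonneg {n : ℕ} (x : Euc n) : 0 ≤ supNorm x :=
  Real.iSup_nonneg fun i => abs_nonneg _

lemma abs_apply_le_norm {n : ℕ} (x : Euc n) (i : Fin n) : |x i| ≤ ‖x‖ := by
  rw [EuclideanSpace.norm_eq x, show |x i| = Real.sqrt (x i ^ 2) by rw [Real.sqrt_sq_eq_abs]]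
  apply Real.sqrt_le_sqrt
  calc x i ^ 2 = ‖x i‖ ^ 2 := by rw [Real.norm_eq_abs, sq_abs]
    _ ≤ ∑ j, ‖x j‖ ^ 2 :=
      Finset.single_le_sum (f := fun j => ‖x j‖ ^ 2) (fun j _ => sq_nonneg _) (Finset.mem_univ i)

lemma supNorm_le_norm {n : ℕ} (x : Euc n) : supNorm x ≤ ‖x‖ :=
  Real.iSup_le (fun i => abs_apply_le_norm x i) (norm_nonneg x)

lemma apply_le_supNorm {n : ℕ} (x : Euc n) (i : Fin n) : |x i| ≤ supNorm x :=
  le_ciSup (f := fun j => |x j|) (Set.Finite.bddAbove (Set.finite_range _)) i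

lemma norm_le_sqrt_mul_supNorm {n : ℕ} (x : Euc n) : ‖x‖ ≤ Real.sqrt n * supNorm x := by
  rw [EuclideanSpace.norm_eq,
    show Real.sqrt n * supNorm x = Real.sqrt (n * (supNorm x * supNorm x)) by
      rw [Real.sqrt_mul (by positivity), Real.sqrt_mul_self (supNorm_nonneg x)]]
  apply Real.sqrt_le_sqrt
  calc ∑ i, ‖x i‖ ^ 2 ≤ ∑ _i : Fin n, supNorm x ^ 2 := by
        apply Finset.sum_le_sum; intro i _
        rw [Real.norm_eq_abs, ← sq_abs (supNorm x),
          abs_of_nonneg (supNorm_nonneg x)]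
        exact pow_le_pow_left₀ (abs_nonneg _) (apply_le_supNorm x i) 2
    _ = n * (supNorm x * supNorm x) := by rw [Finset.sum_const, Finset.card_univ, Fintype.card_fin, nsmul_eq_mul]; ring

lemma arccos_le_pi_mul (c : ℝ) (h1 : -1 ≤ c) (h2 : c ≤ 1) :
    Real.arccos c ≤ Real.pi * Real.sqrt ((1 - c) / 2) := by
  set θ := Real.arccos c with hθ
  have hθ0 : 0 ≤ θ := Real.arccos_nonneg c
  have hθπ : θ ≤ Real.pi := Real.arccos_le_pi c
  have hcos : Real.cos θ = c := Real.cos_arccos h1 h2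
  have hJ : Real.cos θ ≤ 1 - 2 / Real.pi ^ 2 * θ ^ 2 :=
    Real.cos_le_one_sub_mul_cos_sq (by rw [abs_of_nonneg hθ0]; exact hθπ)
  have hπ : (0:ℝ) < Real.pi := Real.pi_pos
  have h3 : θ ^ 2 ≤ Real.pi ^ 2 * ((1 - c) / 2) := by
    rw [hcos] at hJ
    have h4 : 2 / Real.pi ^ 2 * θ ^ 2 ≤ 1 - c := by linarith
    calc θ ^ 2 = Real.pi ^ 2 / 2 * (2 / Real.pi ^ 2 * θ ^ 2) := by
          field_simp
      _ ≤ Real.pi ^ 2 / 2 * (1 - c) := by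
          apply mul_le_mul_of_nonneg_left h4 (by positivity)
      _ = Real.pi ^ 2 * ((1 - c) / 2) := by ring
  calc θ = Real.sqrt (θ ^ 2) := (Real.sqrt_sq hθ0).symm
    _ ≤ Real.sqrt (Real.pi ^ 2 * ((1 - c) / 2)) := Real.sqrt_le_sqrt h3
    _ = Real.pi * Real.sqrt ((1 - c) / 2) := by
        rw [Real.sqrt_mul (by positivity), Real.sqrt_sq hπ.le]

lemma arccos_inner_le {d : ℕ} (u v : Euc d) (hu : u ≠ 0) (hv : v ≠ 0) :
    Real.arccos (⟪u, v⟫ / (‖u‖ * ‖v‖)) ≤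
      Real.pi * (‖u - v‖ / (2 * Real.sqrt (‖u‖ * ‖v‖))) := by
  set c := ⟪u, v⟫ / (‖u‖ * ‖v‖) with hc
  have habs : |c| ≤ 1 := abs_real_inner_div_norm_mul_norm_le_one u v
  obtain ⟨h1, h2⟩ := abs_le.1 habs
  have hnu : (0:ℝ) < ‖u‖ := norm_pos_iff.2 hu
  have hnv : (0:ℝ) < ‖v‖ := norm_pos_iff.2 hv
  have hlaw : ‖u - v‖ ^ 2 = ‖u‖ ^ 2 - 2 * ⟪u, v⟫ + ‖v‖ ^ 2 := norm_sub_sq_real u v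
  have key : (1 - c) / 2 ≤ ‖u - v‖ ^ 2 / (4 * (‖u‖ * ‖v‖)) := by
    rw [hc, div_le_div_iff₀ (by norm_num) (by positivity)]
    have hineq : ‖u‖ * ‖v‖ - ⟪u, v⟫ ≤ ‖u - v‖ ^ 2 / 2 := by nlinarith [sq_nonneg (‖u‖ - ‖v‖)]
    have : (1 - ⟪u, v⟫ / (‖u‖ * ‖v‖)) * (‖u‖ * ‖v‖) = ‖u‖ * ‖v‖ - ⟪u, v⟫ := by
      field_simp
    nlinarith
  calc Real.arccos c ≤ Real.pi * Real.sqrt ((1 - c) / 2) := arccos_le_pi_mul c h1 h2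
    _ ≤ Real.pi * Real.sqrt (‖u - v‖ ^ 2 / (4 * (‖u‖ * ‖v‖))) :=
        mul_le_mul_of_nonneg_left (Real.sqrt_le_sqrt key) Real.pi_pos.le
    _ = Real.pi * (‖u - v‖ / (2 * Real.sqrt (‖u‖ * ‖v‖))) := by
        rw [Real.sqrt_div (sq_nonneg _), Real.sqrt_sq (norm_nonneg _),
          Real.sqrt_mul (by norm_num : (0:ℝ) ≤ 4),
          show Real.sqrt 4 = 2 by
            rw [show (4:ℝ) = 2 ^ 2 by norm_num, Real.sqrt_sq (by norm_num : (0:ℝ) ≤ 2)]]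

lemma coeff_bound {k d : ℕ} (v : Fin k → Euc d) (β : ℝ) (hβ : 0 < β)
    (γ : ℝ) (hγ0 : 0 ≤ γ) (hγ1 : γ < 1)
    (hnorm : ∀ s, 1 / β ≤ ‖v s‖)
    (hip : ∀ s, ∀ z ∈ Submodule.span ℝ ((fun t => v t) '' {t | t ≠ s}),
      |⟪v s, z⟫| ≤ γ * (‖v s‖ * ‖z‖))
    (a : Fin k → ℝ) (s : Fin k) :
    |a s| ≤ β / Real.sqrt (1 - γ ^ 2) * ‖∑ t, a t • v t‖ := by
  set z := ∑ t ∈ Finset.univ.erase s, a t • v t with hz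
  have hsum : a s • v s + z = ∑ t, a t • v t :=
    Finset.add_sum_erase _ (fun t => a t • v t) (Finset.mem_univ s)
  have hzmem : z ∈ Submodule.span ℝ ((fun t => v t) '' {t | t ≠ s}) := by
    apply Submodule.sum_mem
    intro t ht
    exact Submodule.smul_mem _ _ (Submodule.subset_span
      ⟨t, Finset.ne_of_mem_erase ht, rfl⟩)
  set u := ∑ t, a t • v t with hu
  have hexp : ‖u‖ ^ 2 = ‖a s • v s‖ ^ 2 + 2 * ⟪a s • v s, z⟫ + ‖z‖ ^ 2 := by
    rw [← hsum]; exact norm_add_sq_real _ _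
  have hinner : ⟪a s • v s, z⟫ = a s * ⟪v s, z⟫ := real_inner_smul_left _ _ _
  have hipb : |⟪v s, z⟫| ≤ γ * (‖v s‖ * ‖z‖) := hip s z hzmem
  have hnvs : (0:ℝ) < ‖v s‖ := lt_of_lt_of_le (by positivity) (hnorm s)
  have hsq : (|a s| * ‖v s‖) ^ 2 * (1 - γ ^ 2) ≤ ‖u‖ ^ 2 := by
    have h1 : a s * ⟪v s, z⟫ ≥ -(|a s| * (γ * (‖v s‖ * ‖z‖))) := by
      have := neg_abs_le (a s * ⟪v s, z⟫)
      have h2 : |a s * ⟪v s, z⟫| ≤ |a s| * (γ * (‖v s‖ * ‖z‖)) := by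
        rw [abs_mul]
        exact mul_le_mul_of_nonneg_left hipb (abs_nonneg _)
      linarith
    have hns : ‖a s • v s‖ = |a s| * ‖v s‖ := by rw [norm_smul, Real.norm_eq_abs]
    rw [hinner, hns] at hexp
    nlinarith [sq_nonneg (‖z‖ - γ * (|a s| * ‖v s‖)), abs_nonneg (a s), norm_nonneg z]
  have hsqrtpos : (0:ℝ) < Real.sqrt (1 - γ ^ 2) := Real.sqrt_pos.2 (by nlinarith)
  have h5 : |a s| * ‖v s‖ * Real.sqrt (1 - γ ^ 2) ≤ ‖u‖ := by
    have := Real.sqrt_le_sqrt hsq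
    rwa [Real.sqrt_mul (by positivity), Real.sqrt_sq (by positivity),
      Real.sqrt_sq (norm_nonneg u)] at this
  rw [div_mul_eq_mul_div, le_div_iff₀ hsqrtpos]
  have hβv : 1 ≤ β * ‖v s‖ := by
    have h6 := hnorm s
    rw [div_le_iff₀ hβ] at h6
    nlinarith [h6]
  nlinarith [abs_nonneg (a s), norm_nonneg u, mul_le_mul_of_nonneg_right h5 hβ.le]

lemma angle_ip_bound {d : ℕ} (θ₀ : ℝ) (hθ0 : 0 ≤ θ₀) (hθπ : θ₀ ≤ Real.pi)
    (w : Euc d) (hw : w ≠ 0) (K : Submodule ℝ (Euc d))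
    (h : θ₀ ≤ subAngle (Submodule.span ℝ {w}) K) :
    ∀ z ∈ K, |⟪w, z⟫| ≤ Real.cos θ₀ * (‖w‖ * ‖z‖) := by
  intro z hzK
  rcases eq_or_ne z 0 with rfl | hz
  · simp
  -- the inf over K, at base point w
  have hVK : Nonempty {v : Euc d // v ∈ K ∧ v ≠ 0} := ⟨⟨z, hzK, hz⟩⟩
  set G : {v : Euc d // v ∈ K ∧ v ≠ 0} → ℝ :=
    fun v => Real.arccos (⟪w, v.1⟫ / (‖w‖ * ‖v.1‖)) with hG
  have hGbdd : BddBelow (Set.range G) := by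
    refine ⟨0, ?_⟩; rintro y ⟨v, rfl⟩; exact Real.arccos_nonneg _
  have hsub : subAngle (Submodule.span ℝ {w}) K ≤ ⨅ v, G v := by
    apply Real.iSup_le _ (le_ciInf fun v => Real.arccos_nonneg _)
    rintro ⟨u, huH, hu0⟩
    obtain ⟨t, rfl⟩ := Submodule.mem_span_singleton.1 huH
    have ht : t ≠ 0 := by rintro rfl; simp at hu0
    apply le_ciInf
    intro v
    have hbdd : BddBelow (Set.range fun v' : {v : Euc d // v ∈ K ∧ v ≠ 0} =>
        Real.arccos (⟪t • w, v'.1⟫ / (‖t • w‖ * ‖v'.1‖))) := by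
      refine ⟨0, ?_⟩; rintro y ⟨v', rfl⟩; exact Real.arccos_nonneg _
    have hmem : t • v.1 ∈ K := K.smul_mem t v.2.1
    have hne : t • v.1 ≠ 0 := smul_ne_zero ht v.2.2
    refine le_trans (ciInf_le hbdd ⟨t • v.1, hmem, hne⟩) (le_of_eq ?_)
    show Real.arccos _ = Real.arccos _
    congr 1
    have h1 : ⟪t • w, t • v.1⟫ = t ^ 2 * ⟪w, v.1⟫ := by
      rw [real_inner_smul_left, real_inner_smul_right]; ring
    have h2 : ‖t • w‖ * ‖t • v.1‖ = t ^ 2 * (‖w‖ * ‖v.1‖) := by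
      rw [norm_smul, norm_smul, Real.norm_eq_abs,
        show |t| * ‖w‖ * (|t| * ‖v.1‖) = |t| * |t| * (‖w‖ * ‖v.1‖) by ring,
        abs_mul_abs_self, sq]
    rw [h1, h2, mul_div_mul_left _ _ (pow_ne_zero 2 ht)]
  have hm : ∀ v : {v : Euc d // v ∈ K ∧ v ≠ 0}, θ₀ ≤ G v :=
    fun v => le_trans (le_trans h hsub) (ciInf_le hGbdd v)
  have hwn : (0:ℝ) < ‖w‖ := norm_pos_iff.2 hw
  have hzn : (0:ℝ) < ‖z‖ := norm_pos_iff.2 hz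
  have key : ∀ y : Euc d, y ∈ K → y ≠ 0 → ⟪w, y⟫ / (‖w‖ * ‖y‖) ≤ Real.cos θ₀ := by
    intro y hy hy0
    have h1 := hm ⟨y, hy, hy0⟩
    have habs : |⟪w, y⟫ / (‖w‖ * ‖y‖)| ≤ 1 := abs_real_inner_div_norm_mul_norm_le_one w y
    obtain ⟨hl, hr⟩ := abs_le.1 habs
    have := Real.cos_le_cos_of_nonneg_of_le_pi hθ0 (Real.arccos_le_pi _) h1
    rwa [Real.cos_arccos hl hr] at this
  have hpos := key z hzK hz
  have hneg : -(⟪w, z⟫ / (‖w‖ * ‖z‖)) ≤ Real.cos θ₀ := by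
    have := key (-z) (K.neg_mem hzK) (neg_ne_zero.2 hz)
    rwa [inner_neg_right, norm_neg, neg_div] at this
  have habs2 : |⟪w, z⟫ / (‖w‖ * ‖z‖)| ≤ Real.cos θ₀ := abs_le.2 ⟨by linarith, hpos⟩
  have hP : (0:ℝ) < ‖w‖ * ‖z‖ := by positivity
  have heq : |⟪w, z⟫| = |⟪w, z⟫ / (‖w‖ * ‖z‖)| * (‖w‖ * ‖z‖) := by
    rw [abs_div, abs_of_pos hP, div_mul_cancel₀ _ hP.ne']
  rw [heq]
  exact mul_le_mul_of_nonneg_right habs2 hP.le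

lemma arccos_bddBelow {d : ℕ} (u : Euc d) (K : Submodule ℝ (Euc d)) :
    BddBelow (Set.range fun v : {v : Euc d // v ∈ K ∧ v ≠ 0} =>
      Real.arccos (⟪u, v.1⟫ / (‖u‖ * ‖v.1‖))) := by
  refine ⟨0, ?_⟩; rintro y ⟨v, rfl⟩; exact Real.arccos_nonneg _

/-- **Lemma 5.** There is `c = c(k,d,β)` such that for any `f, g ∈ 𝓕` and `x ∈ [0,1]^k`,
`∠(f⃗(x), g⃗(x)) ≤ c max_s ‖∂_s f(x) - ∂_s g(x)‖_∞`. -/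
theorem phi_psi (k d : ℕ) (hk : 1 ≤ k) (hkd : k < d) (β : ℝ) (hβ : 1 ≤ β) :
    ∃ c : ℝ, 0 < c ∧ ∀ f ∈ ClassF k d β, ∀ g ∈ ClassF k d β, ∀ x ∈ unitCube k,
      subAngle (tangent f x) (tangent g x) ≤ c * ⨆ s : Fin k, supNorm (pd s f x - pd s g x) := by
  have hβ0 : (0:ℝ) < β := lt_of_lt_of_le one_pos hβ
  have hdk : (1:ℝ) ≤ (d:ℝ) - k := by
    have : ((k:ℝ) + 1) ≤ (d:ℝ) := by exact_mod_cast hkd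
    linarith
  set θ₀ : ℝ := 1/(2*β*((d:ℝ) - k)) with hθ₀def
  have hden : (0:ℝ) < 2*β*((d:ℝ) - k) := by nlinarith
  have hθpos : 0 < θ₀ := div_pos one_pos hden
  have hθhalf : θ₀ ≤ 1/2 := by
    rw [hθ₀def, div_le_div_iff₀ hden (by norm_num)]
    nlinarith
  have hπ3 : (3:ℝ) < Real.pi := Real.pi_gt_three
  have hθπ : θ₀ ≤ Real.pi := by linarith
  set γ : ℝ := Real.cos θ₀ with hγdef
  have hγ0 : 0 ≤ γ := Real.cos_nonneg_of_mem_Icc ⟨by linarith, by linarith⟩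
  have hγ1 : γ < 1 := by
    have hs : 0 < Real.sin θ₀ := Real.sin_pos_of_pos_of_lt_pi hθpos (by linarith)
    have hsc := Real.sin_sq_add_cos_sq θ₀
    nlinarith
  have hsq1 : (0:ℝ) < 1 - γ ^ 2 := by nlinarith
  set M : ℝ := β / Real.sqrt (1 - γ ^ 2) with hMdef
  have hM : 0 < M := div_pos hβ0 (Real.sqrt_pos.2 hsq1)
  have hd0 : (0:ℝ) < Real.sqrt d := Real.sqrt_pos.2 (by exact_mod_cast lt_of_le_of_lt (Nat.zero_le k) hkd)
  set L : ℝ := k * M * Real.sqrt d with hLdef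
  have hL : 0 < L := by
    have : (0:ℝ) < (k:ℝ) := by exact_mod_cast hk
    positivity
  refine ⟨8 * L, by positivity, ?_⟩
  intro f hf g hg x hx
  obtain ⟨-, -, -, -, hf5, -, hf7⟩ := hf
  obtain ⟨-, -, -, -, hg5, -, -⟩ := hg
  set v : Fin k → Euc d := fun s => pd s f x with hvdef
  set w : Fin k → Euc d := fun s => pd s g x with hwdef
  set δ : ℝ := ⨆ s : Fin k, supNorm (pd s f x - pd s g x) with hδdef
  have hδ0 : 0 ≤ δ := Real.iSup_nonneg fun s => supNorm_nonneg _
  have hδs : ∀ s, ‖v s - w s‖ ≤ Real.sqrt d * δ := by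
    intro s
    refine (norm_le_sqrt_mul_supNorm _).trans ?_
    apply mul_le_mul_of_nonneg_left _ (Real.sqrt_nonneg _)
    exact le_ciSup (f := fun s => supNorm (pd s f x - pd s g x))
      (Set.Finite.bddAbove (Set.finite_range _)) s
  have hvnorm : ∀ s, 1/β ≤ ‖v s‖ :=
    fun s => ((hf5 s x hx).1).trans (supNorm_le_norm _)
  have hwnorm : ∀ s, 1/β ≤ ‖w s‖ :=
    fun s => ((hg5 s x hx).1).trans (supNorm_le_norm _)
  have hvne : ∀ s, v s ≠ 0 := by
    intro s h0
    have := hvnorm s; rw [h0, norm_zero] at this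
    have : (0:ℝ) < 1/β := by positivity
    linarith [hvnorm s, (by rw [h0, norm_zero] : ‖v s‖ = (0:ℝ))]
  have hwne : ∀ s, w s ≠ 0 := by
    intro s h0
    have h1 := hwnorm s; rw [h0, norm_zero] at h1
    have : (0:ℝ) < 1/β := by positivity
    linarith
  have hip : ∀ s, ∀ z ∈ Submodule.span ℝ ((fun t => v t) '' {t | t ≠ s}),
      |⟪v s, z⟫| ≤ γ * (‖v s‖ * ‖z‖) := by
    intro s z hzmem
    rcases lt_or_ge 1 k with hk1 | hk1
    · exact angle_ip_bound θ₀ hθpos.le hθπ (v s) (hvne s) _ (hf7 hk1 s x hx) z hzmem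
    · have hkone : k = 1 := le_antisymm hk1 hk
      have hempty : {t : Fin k | t ≠ s} = ∅ := by
        ext t
        simp only [Set.mem_setOf_eq, Set.mem_empty_iff_false, iff_false, not_not]
        subst hkone
        exact Subsingleton.elim t s
      rw [hempty, Set.image_empty, Submodule.span_empty, Submodule.mem_bot] at hzmem
      rw [hzmem]
      simp
  -- delta case split
  rcases le_or_gt (L * δ) (1/2) with hcase | hcase
  · rw [subAngle]
    apply Real.iSup_le _ (by positivity)
    rintro ⟨u, huH, hu0⟩
    have huH' : u ∈ Submodule.span ℝ (Set.range v) := huH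
    obtain ⟨a, ha⟩ := Submodule.mem_span_range_iff_exists_fun ℝ |>.1 huH'
    set vv : Euc d := ∑ t, a t • w t with hvvdef
    have hu0n : (0:ℝ) < ‖u‖ := norm_pos_iff.2 hu0
    have hcoef : ∀ s, |a s| ≤ M * ‖u‖ := by
      intro s
      have := coeff_bound v β hβ0 γ hγ0 hγ1 hvnorm hip a s
      rwa [ha, ← hMdef] at this
    have hdiff : ‖u - vv‖ ≤ L * δ * ‖u‖ := by
      have heq : u - vv = ∑ t, a t • (v t - w t) := by
        rw [← ha, hvvdef, ← Finset.sum_sub_distrib]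
        congr 1; funext t; rw [smul_sub]
      rw [heq]
      calc ‖∑ t, a t • (v t - w t)‖ ≤ ∑ t, ‖a t • (v t - w t)‖ := norm_sum_le _ _
        _ ≤ ∑ _t : Fin k, M * ‖u‖ * (Real.sqrt d * δ) := by
            apply Finset.sum_le_sum
            intro t _
            rw [norm_smul, Real.norm_eq_abs]
            exact mul_le_mul (hcoef t) (hδs t) (norm_nonneg _) (by positivity)
        _ = L * δ * ‖u‖ := by
            rw [Finset.sum_const, Finset.card_univ, Fintype.card_fin, nsmul_eq_mul, hLdef]
            ring
    have hvvn : ‖u‖/2 ≤ ‖vv‖ := by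
      have h1 : ‖u‖ - ‖vv‖ ≤ ‖u - vv‖ := norm_sub_norm_le u vv
      have h2 : L * δ * ‖u‖ ≤ (1/2) * ‖u‖ := mul_le_mul_of_nonneg_right hcase hu0n.le
      linarith
    have hvv0 : vv ≠ 0 := by
      intro h0; rw [h0, norm_zero] at hvvn; linarith
    have hvvK : vv ∈ tangent g x :=
      Submodule.sum_mem _ fun t _ =>
        Submodule.smul_mem _ _ (Submodule.subset_span ⟨t, rfl⟩)
    refine le_trans (ciInf_le (arccos_bddBelow u (tangent g x)) ⟨vv, hvvK, hvv0⟩) ?_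
    refine le_trans (arccos_inner_le u vv hu0 hvv0) ?_
    have hsqrt : ‖u‖/2 ≤ Real.sqrt (‖u‖ * ‖vv‖) := by
      rw [show ‖u‖/2 = Real.sqrt ((‖u‖/2)^2) by rw [Real.sqrt_sq (by positivity)]]
      apply Real.sqrt_le_sqrt
      nlinarith
    have hfrac : ‖u - vv‖ / (2 * Real.sqrt (‖u‖ * ‖vv‖)) ≤ L * δ := by
      have hden2 : (0:ℝ) < 2 * (‖u‖/2) := by positivity
      calc ‖u - vv‖ / (2 * Real.sqrt (‖u‖ * ‖vv‖)) ≤ (L * δ * ‖u‖) / (2 * (‖u‖/2)) := by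
            apply div_le_div₀ (by positivity) hdiff hden2
            have := hsqrt; linarith
        _ = L * δ := by field_simp
    calc Real.pi * (‖u - vv‖ / (2 * Real.sqrt (‖u‖ * ‖vv‖))) ≤ Real.pi * (L * δ) :=
          mul_le_mul_of_nonneg_left hfrac Real.pi_pos.le
      _ ≤ 4 * (L * δ) := mul_le_mul_of_nonneg_right Real.pi_le_four (by positivity)
      _ ≤ 8 * L * δ := by
          have h8 : (8:ℝ) * L * δ = 4 * (L * δ) + 4 * (L * δ) := by ring
          linarith [mul_nonneg hL.le hδ0, h8]
  · rw [subAngle]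
    apply Real.iSup_le _ (by positivity)
    rintro ⟨u, huH, hu0⟩
    have hs0 : Fin k := ⟨0, hk⟩
    have hwK : w hs0 ∈ tangent g x := Submodule.subset_span ⟨hs0, rfl⟩
    refine le_trans (ciInf_le (arccos_bddBelow u (tangent g x)) ⟨w hs0, hwK, hwne hs0⟩) ?_
    calc Real.arccos _ ≤ Real.pi := Real.arccos_le_pi _
      _ ≤ 4 := Real.pi_le_four
      _ ≤ 8 * L * δ := by
          have h8 : (8:ℝ) * L * δ = 8 * (L * δ) := by ring
          linarith [h8, hcase]
end
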